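/- Let B > 0 and u ∈ C([0,T]). Let M solve M' + BM = u, M(0)=0, and let M* solve -(M*)' + B M* = the function M, with M*(T)=0 (i.e. M* = M*(M(u))). Then ∫₀ᵀ (u(t) - B² M*(t)) u(t) dt = ∫₀ᵀ (u(t) - B·M(t))² dt + B·M(T)². -/

import Mathlib

/-- with `M = M(u)` (forward: `M' + BM = u`, `M(0)=0`) and
`Ms = M*(M(u))` (backward: `-Ms' + B Ms = M`, `Ms(T)=0`), one has
`∫₀ᵀ (u - B² Ms) u = ∫₀ᵀ (u - BM)² + B·M(T)²`. -/
theorem stmt_12 (T B : ℝ) (hT : 0 < T) (hB : 0 < B)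
    (u M M' Ms Ms' : ℝ → ℝ)
    (hu : ContinuousOn u (Set.Icc 0 T))
    (hMd : ∀ t ∈ Set.Icc (0:ℝ) T, HasDerivWithinAt M (M' t) (Set.Icc 0 T) t)
    (hMc : ContinuousOn M' (Set.Icc 0 T))
    (hMeq : ∀ t ∈ Set.Icc (0:ℝ) T, M' t + B * M t = u t)
    (hM0 : M 0 = 0)
    (hMsd : ∀ t ∈ Set.Icc (0:ℝ) T, HasDerivWithinAt Ms (Ms' t) (Set.Icc 0 T) t)
    (hMsc : ContinuousOn Ms' (Set.Icc 0 T))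
    (hMseq : ∀ t ∈ Set.Icc (0:ℝ) T, -Ms' t + B * Ms t = M t)
    (hMsT : Ms T = 0) :
    ∫ t in (0:ℝ)..T, (u t - B ^ 2 * Ms t) * u t
      = (∫ t in (0:ℝ)..T, (u t - B * M t) ^ 2) + B * M T ^ 2 := by
  have hle : (0:ℝ) ≤ T := hT.le
  have huIcc : Set.uIcc (0:ℝ) T = Set.Icc 0 T := Set.uIcc_of_le hle
  -- continuity of M, Ms on Icc
  have hMcont : ContinuousOn M (Set.Icc 0 T) := fun t ht =>
    (hMd t ht).continuousWithinAt
  have hMscont : ContinuousOn Ms (Set.Icc 0 T) := fun t ht =>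
    (hMsd t ht).continuousWithinAt
  set φ : ℝ → ℝ := fun t => 2*B*M t*M' t - B^2*(Ms' t * M t + Ms t * M' t) with hφ
  set F : ℝ → ℝ := fun t => B * M t ^ 2 - B^2 * (Ms t * M t) with hF
  have hφcont : ContinuousOn φ (Set.Icc 0 T) := by
    apply ContinuousOn.sub
    · exact ((continuousOn_const.mul hMcont).mul hMc)
    · exact continuousOn_const.mul ((hMsc.mul hMcont).add (hMscont.mul hMc))
  have hFd : ∀ t ∈ Set.Icc (0:ℝ) T, HasDerivWithinAt F (φ t) (Set.Icc 0 T) t := by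
    intro t ht
    have h1 : HasDerivWithinAt (fun s => M s ^ 2) (2 * M t * M' t) (Set.Icc 0 T) t := by
      have := (hMd t ht).fun_pow 2
      simpa [mul_assoc, mul_comm] using this
    have h2 : HasDerivWithinAt (fun s => Ms s * M s) (Ms' t * M t + Ms t * M' t)
        (Set.Icc 0 T) t := (hMsd t ht).mul (hMd t ht)
    have := (h1.const_mul B).fun_sub (h2.const_mul (B^2))
    refine this.congr_deriv ?_
    simp [hφ]; ring
  -- FTC for φ
  have hFTC : ∫ t in (0:ℝ)..T, φ t = F T - F 0 := by
    apply intervalIntegral.integral_eq_sub_of_hasDeriv_right_of_le hle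
    · exact fun t ht => ((hFd t ht).continuousWithinAt)
    · intro t ht
      have htI : t ∈ Set.Icc (0:ℝ) T := Set.mem_Icc_of_Ioo ht
      have hmem : Set.Icc (0:ℝ) T ∈ nhds t := Icc_mem_nhds ht.1 ht.2
      exact ((hFd t htI).hasDerivAt hmem).hasDerivWithinAt
    · exact (hφcont.intervalIntegrable_of_Icc hle)
  have hFval : F T - F 0 = B * M T ^ 2 := by
    simp [hF, hMsT, hM0]
  -- pointwise identity
  have hpt : ∀ t ∈ Set.Icc (0:ℝ) T,
      (u t - B ^ 2 * Ms t) * u t = (u t - B * M t) ^ 2 + φ t := by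
    intro t ht
    have h1 : u t = M' t + B * M t := (hMeq t ht).symm
    have h2 : Ms' t = B * Ms t - M t := by linarith [hMseq t ht]
    rw [h1, hφ]; simp only []; rw [h2]; ring
  have hint1 : IntervalIntegrable (fun t => (u t - B * M t) ^ 2) MeasureTheory.volume 0 T :=
    ((hu.sub (continuousOn_const.mul hMcont)).pow 2).intervalIntegrable_of_Icc hle
  have hint2 : IntervalIntegrable φ MeasureTheory.volume 0 T :=
    hφcont.intervalIntegrable_of_Icc hle
  calc ∫ t in (0:ℝ)..T, (u t - B ^ 2 * Ms t) * u t
      = ∫ t in (0:ℝ)..T, ((u t - B * M t) ^ 2 + φ t) := by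
        apply intervalIntegral.integral_congr
        intro t ht
        exact hpt t (huIcc ▸ ht)
    _ = (∫ t in (0:ℝ)..T, (u t - B * M t) ^ 2) + ∫ t in (0:ℝ)..T, φ t :=
        intervalIntegral.integral_add hint1 hint2
    _ = (∫ t in (0:ℝ)..T, (u t - B * M t) ^ 2) + B * M T ^ 2 := by
        rw [hFTC, hFval]
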